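/- Let A, B ⊆ ℤ^r and let s be a positive integer. If A × ℤ^s and B × ℤ^s are bounded distance equivalent with constant K (as subsets of ℝ^{r+s}), then A and B are bounded distance equivalent with the same constant K. -/

import Mathlib

open Set Function


private theorem sb_rel {α β : Type*} {f : α → β} {g : β → α} (hf : Function.Injective f)
    (hg : Function.Injective g) :
    ∃ h : α → β, Function.Bijective h ∧ ∀ a, h a = f a ∨ g (h a) = a := by
  classical
  cases' isEmpty_or_nonempty β with hβ hβ
  · have : IsEmpty α := Function.isEmpty f
    exact ⟨f, by constructor <;> (intro a; exact (IsEmpty.false a).elim), fun a => (IsEmpty.false a).elim⟩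
  set F : Set α →o Set α :=
    { toFun := fun s => (g '' (f '' s)ᶜ)ᶜ
      monotone' := fun s t hst =>
        compl_subset_compl.mpr <| image_mono <| compl_subset_compl.mpr <| image_mono hst }
  set s : Set α := F.lfp
  have hs : (g '' (f '' s)ᶜ)ᶜ = s := F.map_lfp
  have hns : g '' (f '' s)ᶜ = sᶜ := compl_injective (by simp [hs])
  set g' := invFun g
  have g'g : LeftInverse g' g := leftInverse_invFun hg
  have hg'ns : g' '' sᶜ = (f '' s)ᶜ := by rw [← hns, g'g.image_image]
  set h : α → β := s.piecewise f g'
  have hsurj : Surjective h := by rw [← range_eq_univ, range_piecewise, hg'ns, union_compl_self]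
  have hinj : Injective h := by
    refine (injective_piecewise_iff _).2 ⟨hf.injOn, ?_, ?_⟩
    · intro x hx y hy hxy
      obtain ⟨x', _, rfl⟩ : x ∈ g '' (f '' s)ᶜ := by rwa [hns]
      obtain ⟨y', _, rfl⟩ : y ∈ g '' (f '' s)ᶜ := by rwa [hns]
      rw [g'g _, g'g _] at hxy
      rw [hxy]
    · intro x hx y hy hxy
      obtain ⟨y', hy', rfl⟩ : y ∈ g '' (f '' s)ᶜ := by rwa [hns]
      rw [g'g _] at hxy
      exact hy' ⟨x, hx, hxy⟩
  refine ⟨h, ⟨hinj, hsurj⟩, fun a => ?_⟩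
  by_cases ha : a ∈ s
  · left; simp [h, Set.piecewise_eq_of_mem _ _ _ ha]
  · right
    obtain ⟨b, _, rfl⟩ : a ∈ g '' (f '' s)ᶜ := by rwa [hns]
    simp [h, Set.piecewise_eq_of_notMem _ _ _ ha, g'g b]

private theorem le_of_mul_pow_le {m n c d : ℕ}
    (h : ∀ N : ℕ, m * (2 * N + 1) ^ d ≤ n * (2 * (N + c) + 1) ^ d) : m ≤ n := by
  have h1 : ∀ N : ℕ, (m : ℝ) ≤ (n : ℝ) * ((2 * (N : ℝ) + 2 * c + 1) / (2 * N + 1)) ^ d := by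
    intro N
    have hpos : (0 : ℝ) < 2 * (N : ℝ) + 1 := by positivity
    have h2 : (m : ℝ) * (2 * (N : ℝ) + 1) ^ d ≤ (n : ℝ) * (2 * (N : ℝ) + 2 * c + 1) ^ d := by
      have := h N
      have := (Nat.cast_le (α := ℝ)).2 this
      push_cast at this
      have e : (2 * (N : ℝ) + 2 * c + 1) = 2 * ((N : ℝ) + c) + 1 := by ring
      rw [e]
      exact this
    rw [div_pow, ← mul_div_assoc, le_div_iff₀ (by positivity)]
    exact h2
  have htop : Filter.Tendsto (fun N : ℕ => 2 * (N : ℝ) + 1) Filter.atTop Filter.atTop := by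
    apply Filter.tendsto_atTop_add_const_right
    exact (tendsto_natCast_atTop_atTop (R := ℝ)).const_mul_atTop two_pos
  have t1 : Filter.Tendsto (fun N : ℕ => (2 * (N : ℝ) + 2 * c + 1) / (2 * N + 1))
      Filter.atTop (nhds 1) := by
    have heq : ∀ N : ℕ, (2 * (N : ℝ) + 2 * c + 1) / (2 * N + 1) = 1 + 2 * c / (2 * N + 1) := by
      intro N
      have hpos : (0 : ℝ) < 2 * (N : ℝ) + 1 := by positivity
      field_simp
      ring
    simp_rw [heq]
    have : Filter.Tendsto (fun N : ℕ => 2 * (c : ℝ) / (2 * N + 1)) Filter.atTop (nhds 0) :=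
      Filter.Tendsto.div_atTop tendsto_const_nhds htop
    simpa using tendsto_const_nhds.add this
  have t2 : Filter.Tendsto (fun N : ℕ => (n : ℝ) * ((2 * (N : ℝ) + 2 * c + 1) / (2 * N + 1)) ^ d)
      Filter.atTop (nhds n) := by
    have := tendsto_const_nhds (x := (n : ℝ)) (f := Filter.atTop (α := ℕ)) |>.mul (t1.pow d)
    simpa using this
  exact_mod_cast ge_of_tendsto' t2 h1


private theorem key_inj {r s : ℕ} (A B : Set (Fin r → ℤ)) (K : ℝ) (hK : 0 ≤ K)
    (χ : (A ×ˢ (Set.univ : Set (Fin s → ℤ))) → (B ×ˢ (Set.univ : Set (Fin s → ℤ))))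
    (hinj : Function.Injective χ)
    (hd : ∀ p, dist (χ p : (Fin r → ℤ) × (Fin s → ℤ)) (p : (Fin r → ℤ) × (Fin s → ℤ)) ≤ K) :
    ∃ f : A → B, Function.Injective f ∧ ∀ a : A, dist (f a : Fin r → ℤ) (a : Fin r → ℤ) ≤ K := by
  classical
  set K' : ℕ := ⌈K⌉₊ with hK'def
  have hcoord : ∀ {n : ℕ} (x y : Fin n → ℤ), dist x y ≤ K → ∀ i, |x i - y i| ≤ (K' : ℤ) := by
    intro n x y hxy i
    have h1 : dist (x i) (y i) ≤ K := (dist_pi_le_iff hK).1 hxy i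
    rw [Int.dist_eq] at h1
    have h2 : (|x i - y i| : ℝ) ≤ (K' : ℝ) := by
      push_cast
      exact h1.trans (Nat.le_ceil K)
    exact_mod_cast h2
  have hfin : ∀ c : Fin r → ℤ, {b : B | dist (b : Fin r → ℤ) c ≤ K}.Finite := by
    intro c
    have hmain : {x : Fin r → ℤ | dist x c ≤ K}.Finite := by
      refine Set.Finite.subset
        (Fintype.piFinset fun i => Finset.Icc (c i - (K' : ℤ)) (c i + (K' : ℤ))).finite_toSet ?_
      intro x hx
      simp only [Finset.coe_sort_coe, Finset.mem_coe, Fintype.mem_piFinset, Finset.mem_Icc]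
      intro i
      have := hcoord x c hx i
      have := abs_le.1 this
      omega
    exact Set.Finite.preimage Subtype.coe_injective.injOn hmain
  set t : A → Finset B := fun a => (hfin (a : Fin r → ℤ)).toFinset with ht
  set box : ℕ → Finset (Fin s → ℤ) :=
    fun N => Fintype.piFinset fun _ => Finset.Icc (-(N : ℤ)) (N : ℤ) with hboxdef
  have hbox : ∀ N, (box N).card = (2 * N + 1) ^ s := by
    intro N
    rw [hboxdef]
    rw [Fintype.card_piFinset]
    simp only [Int.card_Icc]
    rw [Finset.prod_const, Finset.card_univ, Fintype.card_fin]
    congr 1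
    omega
  set emb : A × (Fin s → ℤ) → (A ×ˢ (Set.univ : Set (Fin s → ℤ))) :=
    fun p => ⟨((p.1 : Fin r → ℤ), p.2), ⟨p.1.2, trivial⟩⟩ with hemb
  set Φ : A × (Fin s → ℤ) → B × (Fin s → ℤ) :=
    fun p => (⟨(χ (emb p) : (Fin r → ℤ) × (Fin s → ℤ)).1, (χ (emb p)).2.1⟩,
      (χ (emb p) : (Fin r → ℤ) × (Fin s → ℤ)).2) with hΦ
  have hdists : ∀ p, dist (χ p : (Fin r → ℤ) × (Fin s → ℤ)).1 (p : (Fin r → ℤ) × (Fin s → ℤ)).1 ≤ K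
      ∧ dist (χ p : (Fin r → ℤ) × (Fin s → ℤ)).2 (p : (Fin r → ℤ) × (Fin s → ℤ)).2 ≤ K := by
    intro p
    have := hd p
    rw [Prod.dist_eq] at this
    exact max_le_iff.1 this
  have hΦinj : Function.Injective Φ := by
    rintro ⟨⟨pa, hpa⟩, pz⟩ ⟨⟨qa, hqa⟩, qz⟩ hpq
    have e1 : (Φ ⟨⟨pa, hpa⟩, pz⟩).1.val = (Φ ⟨⟨qa, hqa⟩, qz⟩).1.val := by rw [hpq]
    have e2 : (Φ ⟨⟨pa, hpa⟩, pz⟩).2 = (Φ ⟨⟨qa, hqa⟩, qz⟩).2 := by rw [hpq]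
    have h1 : (χ (emb ⟨⟨pa, hpa⟩, pz⟩) : (Fin r → ℤ) × (Fin s → ℤ)) =
        (χ (emb ⟨⟨qa, hqa⟩, qz⟩) : (Fin r → ℤ) × (Fin s → ℤ)) := Prod.ext e1 e2
    have h2 : emb ⟨⟨pa, hpa⟩, pz⟩ = emb ⟨⟨qa, hqa⟩, qz⟩ := hinj (Subtype.ext h1)
    have h3 : ((pa, pz) : (Fin r → ℤ) × (Fin s → ℤ)) = (qa, qz) := congrArg Subtype.val h2
    injection h3 with h4 h5
    subst h4
    subst h5
    rfl
  have hall : ∀ F : Finset A, F.card ≤ (F.biUnion t).card := by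
    intro F
    apply le_of_mul_pow_le (c := K') (d := s)
    intro N
    have step : (F ×ˢ box N).card ≤ ((F.biUnion t) ×ˢ box (N + K')).card := by
      apply Finset.card_le_card_of_injOn Φ ?_ hΦinj.injOn
      intro p hp
      rw [Finset.mem_coe, Finset.mem_product] at hp
      rw [Finset.mem_coe, Finset.mem_product]
      obtain ⟨hp1, hp2⟩ := hp
      constructor
      · refine Finset.mem_biUnion.2 ⟨p.1, hp1, ?_⟩
        rw [ht]
        rw [Set.Finite.mem_toFinset]
        exact (hdists (emb p)).1
      · rw [hboxdef]
        simp only [Fintype.mem_piFinset, Finset.mem_Icc]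
        intro i
        have hw := hcoord _ _ (hdists (emb p)).2 i
        have hz : p.2 i ∈ Finset.Icc (-(N : ℤ)) (N : ℤ) := by
          rw [hboxdef] at hp2
          exact Fintype.mem_piFinset.1 hp2 i
        rw [Finset.mem_Icc] at hz
        have habs := abs_le.1 hw
        have hez : ((emb p : (A ×ˢ (Set.univ : Set (Fin s → ℤ)))) :
          (Fin r → ℤ) × (Fin s → ℤ)).2 i = p.2 i := rfl
        push_cast
        have hΦe : (Φ p).2 i = (χ (emb p) : (Fin r → ℤ) × (Fin s → ℤ)).2 i := rfl
        omega
    calc F.card * (2 * N + 1) ^ s = (F ×ˢ box N).card := by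
          rw [Finset.card_product, hbox]
      _ ≤ ((F.biUnion t) ×ˢ box (N + K')).card := step
      _ = (F.biUnion t).card * (2 * (N + K') + 1) ^ s := by
          rw [Finset.card_product, hbox]
  obtain ⟨f, hfinj, hft⟩ := (Finset.all_card_le_biUnion_card_iff_exists_injective t).1 hall
  refine ⟨f, hfinj, fun a => ?_⟩
  have := hft a
  rw [ht, Set.Finite.mem_toFinset] at this
  exact this


/-- Two point sets in a metric space are bounded distance equivalent with constant `K`:
there is a bijection moving every point a distance at most `K`. -/
def BDEquivWith {E : Type*} [MetricSpace E] (Λ Λ' : Set E) (K : ℝ) : Prop :=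
  ∃ χ : Λ → Λ', Function.Bijective χ ∧ ∀ p : Λ, dist (χ p : E) (p : E) ≤ K

/-- If `A × ℤ^s` and `B × ℤ^s` are bounded distance equivalent with constant `K`
(as subsets of `ℝ^{r+s}`, with the sup metric), then `A` and `B` are bounded distance
equivalent with the same constant `K`. -/
theorem bde_product_implies_bde {r s : ℕ} (hs : 0 < s)
    (A B : Set (Fin r → ℤ)) (K : ℝ) (hK : 0 < K)
    (h : BDEquivWith (A ×ˢ (Set.univ : Set (Fin s → ℤ)))
      (B ×ˢ (Set.univ : Set (Fin s → ℤ))) K) :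
    BDEquivWith A B K := by
  obtain ⟨χ, hbij, hdist⟩ := h
  set e := Equiv.ofBijective χ hbij with he
  have hχ : ∀ q, χ (e.symm q) = q := fun q => e.apply_symm_apply q
  have hdist' : ∀ q, dist ((e.symm q : (Fin r → ℤ) × (Fin s → ℤ)))
      ((q : (Fin r → ℤ) × (Fin s → ℤ))) ≤ K := by
    intro q
    have := hdist (e.symm q)
    rw [hχ q] at this
    rw [dist_comm]
    exact this
  obtain ⟨f, hfinj, hfd⟩ := key_inj A B K hK.le χ hbij.injective hdist
  obtain ⟨g, hginj, hgd⟩ := key_inj B A K hK.le e.symm e.symm.injective hdist'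
  obtain ⟨φ, hφbij, hφ⟩ := sb_rel hfinj hginj
  refine ⟨φ, hφbij, fun a => ?_⟩
  rcases hφ a with hc | hc
  · rw [hc]; exact hfd a
  · have := hgd (φ a)
    calc dist (φ a : Fin r → ℤ) (a : Fin r → ℤ)
        = dist ((g (φ a)) : Fin r → ℤ) ((φ a) : Fin r → ℤ) := by rw [hc, dist_comm]
      _ ≤ K := hgd (φ a)
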